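/- Let 𝒮 = (S_1,…,S_n) be a list of finite nonempty subsets of a finite universe U = ⋃_i S_i, and let G and c be the genome and CNP constructed from 𝒮 as described. If 𝒮 admits an exact cover 𝒮* ⊆ {S_1,…,S_n} of cardinality k (i.e. the sets of 𝒮* are pairwise disjoint and their union is U), then there exists a sequence E of exactly k deletion events such that cnp(G⟨E⟩) = c; in particular the minimum number of events needed is at most k. -/

import Mathlib

/-- An event is either a deletion `del i j` (removing the substring from position `i`
to position `j`, 1-based) or a duplication `dup i j p` (copying the substring from
position `i` to position `j` and inserting the copy after position `p`). -/
inductive GEvent where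
  | del (i j : ℕ)
  | dup (i j p : ℕ)
deriving DecidableEq

/-- Applying an event to a genome (a list of characters). -/
def applyEvent {α : Type*} (G : List α) : GEvent → List α
  | .del i j => G.take (i - 1) ++ G.drop j
  | .dup i j p => G.take p ++ ((G.drop (i - 1)).take (j - i + 1)) ++ G.drop p

/-- Validity of an event on a genome: `del i j` requires `1 ≤ i ≤ j ≤ |G|`;
`dup i j p` requires `1 ≤ i ≤ j ≤ |G|` and `p ∈ {0,…,i−1} ∪ {j,…,|G|}`. -/
def GEvent.Valid {α : Type*} (G : List α) : GEvent → Prop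
  | .del i j => 1 ≤ i ∧ i ≤ j ∧ j ≤ G.length
  | .dup i j p => 1 ≤ i ∧ i ≤ j ∧ j ≤ G.length ∧ (p ≤ i - 1 ∨ (j ≤ p ∧ p ≤ G.length))

/-- `applyEvents G E` is `G⟨E⟩`, the genome obtained by successively applying
the events of `E` to `G`. -/
def applyEvents {α : Type*} (G : List α) : List GEvent → List α
  | [] => G
  | e :: E => applyEvents (applyEvent G e) E

/-- A sequence of events is valid on `G` if each event is valid on the genome
obtained by applying the previous events. -/
def ValidSeq {α : Type*} (G : List α) : List GEvent → Prop
  | [] => True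
  | e :: E => e.Valid G ∧ ValidSeq (applyEvent G e) E

/-- The copy-number profile of a genome: the number of occurrences of each character. -/
def cnp {α : Type*} [DecidableEq α] (G : List α) : α → ℕ := fun s => G.count s

/-- The Genome-to-CNP distance: the minimum length of a valid event sequence turning `G`
into a genome with CNP `c` (`⊤` if there is none). -/
noncomputable def dGCNP {α : Type*} [DecidableEq α] (G : List α) (c : α → ℕ) : ℕ∞ :=
  sInf { k : ℕ∞ | ∃ E : List GEvent,
    ValidSeq G E ∧ (E.length : ℕ∞) = k ∧ cnp (applyEvents G E) = c }

/-- The genome constructed from a SET-COVER instance: the alphabet is `Fin n ⊕ V`, where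
`Sum.inl i` is the separator character `σᵢ` and `Sum.inr u` is the character `γᵤ`;
`q i` lists the elements of `S i` (each exactly once), and
`G = σ₁ q(S₁) σ₂ q(S₂) ⋯ σₙ q(Sₙ)`. -/
def scGenome {V : Type*} (n : ℕ) (q : Fin n → List V) : List (Fin n ⊕ V) :=
  (List.finRange n).flatMap (fun i => Sum.inl i :: (q i).map Sum.inr)

/-- The CNP constructed from a SET-COVER instance: `c(σᵢ) = 1` and `c(γᵤ) = f(u) − 1`,
where `f(u)` is the number of sets of the instance containing `u`. -/
def scCNP {V : Type*} [Fintype V] [DecidableEq V] (n : ℕ) (S : Fin n → Finset V) :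
    (Fin n ⊕ V) → ℕ
  | Sum.inl _ => 1
  | Sum.inr u => (Finset.univ.filter fun i => u ∈ S i).card - 1

section Aux
set_option linter.unusedSectionVars false
variable {V : Type*} [DecidableEq V] {n : ℕ}

/-- The genome after deleting the `q`-blocks of the indices in `J`. -/
def gJ (n : ℕ) (q : Fin n → List V) (J : Finset (Fin n)) : List (Fin n ⊕ V) :=
  (List.finRange n).flatMap
    (fun i => Sum.inl i :: (if i ∈ J then [] else (q i).map Sum.inr))

lemma gJ_empty (q : Fin n → List V) : gJ n q ∅ = scGenome n q := by
  simp [gJ, scGenome]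

lemma finRange_split (i : Fin n) :
    List.finRange n =
      (List.finRange n).take i.val ++ i :: (List.finRange n).drop (i.val + 1) := by
  conv_lhs => rw [← List.take_append_drop i.val (List.finRange n)]
  congr 1
  rw [List.drop_eq_getElem_cons (by simpa using i.isLt)]
  congr 1
  simp [List.getElem_finRange]

lemma flatMap_finRange_split {β : Type*} (i : Fin n) (f : Fin n → List β) :
    (List.finRange n).flatMap f =
      ((List.finRange n).take i.val).flatMap f ++ f i ++
        ((List.finRange n).drop (i.val + 1)).flatMap f := by
  conv_lhs => rw [finRange_split i]
  simp [List.flatMap_append]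

lemma not_mem_take_drop (i : Fin n) :
    (i ∉ (List.finRange n).take i.val) ∧ (i ∉ (List.finRange n).drop (i.val + 1)) := by
  have h := List.nodup_finRange n
  rw [finRange_split i] at h
  rw [List.nodup_append] at h
  obtain ⟨-, h2, h3⟩ := h
  refine ⟨fun hi => ?_, (List.nodup_cons.mp h2).1⟩
  exact (h3 i hi i List.mem_cons_self) rfl

lemma flatMap_congr {α β : Type*} {l : List α} {f g : α → List β}
    (h : ∀ a ∈ l, f a = g a) : l.flatMap f = l.flatMap g := by
  induction l with
  | nil => rfl
  | cons a l ih =>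
      simp only [List.flatMap_cons, h a List.mem_cons_self,
        ih (fun b hb => h b (List.mem_cons_of_mem _ hb))]

lemma gJ_split (q : Fin n → List V) (J : Finset (Fin n)) {i : Fin n} (hi : i ∉ J) :
    ∃ A C : List (Fin n ⊕ V),
      gJ n q J = (A ++ [Sum.inl i]) ++ (q i).map Sum.inr ++ C ∧
      gJ n q (insert i J) = (A ++ [Sum.inl i]) ++ C := by
  set f : Fin n → List (Fin n ⊕ V) :=
    fun j => Sum.inl j :: (if j ∈ J then [] else (q j).map Sum.inr) with hf
  set f' : Fin n → List (Fin n ⊕ V) :=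
    fun j => Sum.inl j :: (if j ∈ insert i J then [] else (q j).map Sum.inr) with hf'
  obtain ⟨hT1, hT2⟩ := not_mem_take_drop i
  refine ⟨((List.finRange n).take i.val).flatMap f,
    ((List.finRange n).drop (i.val + 1)).flatMap f, ?_, ?_⟩
  · rw [gJ, ← hf, flatMap_finRange_split i f]
    have : f i = Sum.inl i :: (q i).map Sum.inr := by simp [hf, hi]
    rw [this]
    simp
  · rw [gJ, ← hf', flatMap_finRange_split i f']
    have e1 : ((List.finRange n).take i.val).flatMap f'
        = ((List.finRange n).take i.val).flatMap f := by
      refine flatMap_congr fun a ha => ?_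
      have : a ≠ i := fun h => hT1 (h ▸ ha)
      simp [hf, hf', Finset.mem_insert, this]
    have e2 : ((List.finRange n).drop (i.val + 1)).flatMap f'
        = ((List.finRange n).drop (i.val + 1)).flatMap f := by
      refine flatMap_congr fun a ha => ?_
      have : a ≠ i := fun h => hT2 (h ▸ ha)
      simp [hf, hf', Finset.mem_insert, this]
    rw [e1, e2]
    have : f' i = [Sum.inl i] := by simp [hf']
    rw [this]

lemma del_middle {α : Type*} (A B C : List α) (hB : B ≠ []) :
    GEvent.Valid (A ++ B ++ C) (.del (A.length + 1) (A.length + B.length)) ∧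
    applyEvent (A ++ B ++ C) (.del (A.length + 1) (A.length + B.length)) = A ++ C := by
  constructor
  · refine ⟨Nat.le_add_left _ _, ?_, ?_⟩
    · have : 1 ≤ B.length := List.length_pos_iff.mpr hB
      omega
    · simp [List.length_append]
  · show (A ++ B ++ C).take (A.length + 1 - 1) ++ (A ++ B ++ C).drop (A.length + B.length) = A ++ C
    have h1 : (A ++ B ++ C).take (A.length + 1 - 1) = A := by
      rw [Nat.add_sub_cancel, List.append_assoc]
      exact List.take_left
    have h2 : (A ++ B ++ C).drop (A.length + B.length) = C := by
      have h : (A ++ B).length = A.length + B.length := List.length_append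
      rw [← h]
      exact List.drop_left
    rw [h1, h2]

lemma main_ind (q : Fin n → List V) (hqne : ∀ i, q i ≠ [])
    (L : List (Fin n)) (hL : L.Nodup) :
    ∀ J : Finset (Fin n), (∀ i ∈ L, i ∉ J) →
    ∃ E : List GEvent, (∀ e ∈ E, ∃ a b, e = GEvent.del a b) ∧
      E.length = L.length ∧ ValidSeq (gJ n q J) E ∧
      applyEvents (gJ n q J) E = gJ n q (J ∪ L.toFinset) := by
  induction L with
  | nil => intro J _; exact ⟨[], by simp, rfl, trivial, by simp [applyEvents]⟩
  | cons i L ih =>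
      intro J hJ
      obtain ⟨A, C, hsplit, hins⟩ := gJ_split q J (hJ i List.mem_cons_self)
      obtain ⟨hval, happ⟩ := del_middle (A ++ [Sum.inl i]) ((q i).map Sum.inr) C
        (by simpa using hqne i)
      rw [← hsplit] at hval happ
      rw [← hins] at happ
      have hLnd : L.Nodup := (List.nodup_cons.mp hL).2
      have hiL : i ∉ L := (List.nodup_cons.mp hL).1
      obtain ⟨E, hE1, hE2, hE3, hE4⟩ := ih hLnd (insert i J)
        (fun j hj => by
          simp only [Finset.mem_insert, not_or]
          exact ⟨fun h => hiL (h ▸ hj), hJ j (List.mem_cons_of_mem _ hj)⟩)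
      refine ⟨GEvent.del ((A ++ [Sum.inl i]).length + 1)
          ((A ++ [Sum.inl i]).length + ((q i).map (Sum.inr : V → Fin n ⊕ V)).length)
          :: E, ?_, ?_, ?_, ?_⟩
      · intro e he
        rcases List.mem_cons.mp he with rfl | he'
        · exact ⟨_, _, rfl⟩
        · exact hE1 e he'
      · simp [hE2]
      · exact ⟨hval, by rw [happ]; exact hE3⟩
      · show applyEvents (applyEvent _ _) E = _
        rw [happ, hE4]
        congr 1
        ext j
        simp only [Finset.mem_union, Finset.mem_insert, List.toFinset_cons, List.mem_toFinset]
        tauto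

end Aux

section Count
set_option linter.unusedSectionVars false
variable {V : Type*} [Fintype V] [DecidableEq V] {n : ℕ}

lemma exact_one (S : Fin n → Finset V) (I : Finset (Fin n))
    (hcover : ∀ u : V, ∃ i ∈ I, u ∈ S i)
    (hdisj : ∀ i ∈ I, ∀ j ∈ I, i ≠ j → Disjoint (S i) (S j)) (u : V) :
    ((Finset.univ.filter fun j => u ∈ S j).filter fun j => j ∈ I).card = 1 := by
  obtain ⟨i0, hi0I, hi0⟩ := hcover u
  rw [Finset.card_eq_one]
  refine ⟨i0, ?_⟩
  ext j
  simp only [Finset.mem_filter, Finset.mem_univ, true_and, Finset.mem_singleton]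
  constructor
  · rintro ⟨hj, hjI⟩
    by_contra hne
    exact Finset.disjoint_left.mp (hdisj j hjI i0 hi0I hne) hj hi0
  · rintro rfl; exact ⟨hi0, hi0I⟩

lemma cnp_flatMap {α β : Type*} [DecidableEq α] (l : List β) (f : β → List α) (s : α) :
    cnp (l.flatMap f) s = (l.map (fun b => cnp (f b) s)).sum := by
  show List.count _ _ = _
  rw [List.count_flatMap]
  rfl

lemma cnp_cons {α : Type*} [DecidableEq α] (a x : α) (l : List α) :
    cnp (a :: l) x = (if x = a then 1 else 0) + cnp l x := by
  show List.count _ _ = _ + List.count _ _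
  rw [List.count_cons, Nat.add_comm]
  congr 1
  by_cases h : x = a
  · simp [h]
  · have h' : ¬ a = x := fun e => h e.symm
    simp [h, h']

lemma cnp_nil {α : Type*} [DecidableEq α] (x : α) : cnp ([] : List α) x = 0 := rfl

lemma cnp_map_inr (u : V) (l : List V) :
    cnp (l.map (Sum.inr : V → Fin n ⊕ V)) (Sum.inr u) = cnp l u := by
  simp only [cnp]
  exact @List.count_map_of_injective _ _ _ _ instBEqOfDecidableEq _ _ _ Sum.inr_injective _

lemma cnp_map_inr_inl (i : Fin n) (l : List V) :
    cnp (l.map (Sum.inr : V → Fin n ⊕ V)) (Sum.inl i) = 0 := by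
  simp only [cnp]
  exact @List.count_eq_zero_of_not_mem _ instBEqOfDecidableEq _ _ _ (by simp)

lemma cnp_nodup {α : Type*} [DecidableEq α] {l : List α} (h : l.Nodup) (x : α) :
    cnp l x = if x ∈ l then 1 else 0 := by
  show List.count _ _ = _
  split
  · exact List.count_eq_one_of_mem h ‹_›
  · exact List.count_eq_zero_of_not_mem ‹_›

lemma cnp_gJ (q : Fin n → List V) (hq : ∀ i, (q i).Nodup)
    (S : Fin n → Finset V) (hqmem : ∀ i u, u ∈ q i ↔ u ∈ S i)
    (I : Finset (Fin n))
    (hcover : ∀ u : V, ∃ i ∈ I, u ∈ S i)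
    (hdisj : ∀ i ∈ I, ∀ j ∈ I, i ≠ j → Disjoint (S i) (S j)) :
    cnp (gJ n q I) = scCNP n S := by
  funext s
  rw [gJ, cnp_flatMap]
  rw [show ((List.finRange n).map
      (fun b => cnp (Sum.inl b :: (if b ∈ I then [] else (q b).map Sum.inr)) s)).sum
    = ∑ j : Fin n, cnp (Sum.inl j :: (if j ∈ I then [] else (q j).map Sum.inr)) s from
    (Fin.sum_univ_def _).symm]
  rcases s with i | u
  · have hblock : ∀ j : Fin n,
        cnp (Sum.inl j :: (if j ∈ I then ([] : List (Fin n ⊕ V)) else (q j).map Sum.inr))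
          (Sum.inl i) = if i = j then 1 else 0 := by
      intro j
      rw [cnp_cons]
      have h0 : cnp (if j ∈ I then ([] : List (Fin n ⊕ V)) else (q j).map Sum.inr)
          (Sum.inl i) = 0 := by
        split
        · exact cnp_nil _
        · exact cnp_map_inr_inl i (q j)
      rw [h0, add_zero]
      simp [Sum.inl.injEq]
    simp only [hblock]
    simp [scCNP, Finset.sum_ite_eq]
  · have hblock : ∀ j : Fin n,
        cnp (Sum.inl j :: (if j ∈ I then ([] : List (Fin n ⊕ V)) else (q j).map Sum.inr))
          (Sum.inr u) = if j ∉ I ∧ u ∈ S j then 1 else 0 := by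
      intro j
      rw [cnp_cons, if_neg (by simp), zero_add]
      by_cases hjI : j ∈ I
      · rw [if_pos hjI, if_neg (by tauto)]
        exact cnp_nil _
      · rw [if_neg hjI, cnp_map_inr, cnp_nodup (hq j)]
        by_cases hu : u ∈ S j
        · rw [if_pos ((hqmem j u).mpr hu), if_pos ⟨hjI, hu⟩]
        · rw [if_neg (fun h => hu ((hqmem j u).mp h)), if_neg (by tauto)]
    simp only [hblock]
    have h2 : (∑ j : Fin n, if j ∉ I ∧ u ∈ S j then 1 else 0)
        = ((Finset.univ.filter fun j => u ∈ S j).filter fun j => ¬ j ∈ I).card := by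
      rw [Finset.filter_filter, Finset.sum_boole]
      norm_cast
      congr 1
      apply Finset.filter_congr
      intro j _
      tauto
    have hsplit : ((Finset.univ.filter fun j => u ∈ S j).filter fun j => j ∈ I).card
        + ((Finset.univ.filter fun j => u ∈ S j).filter fun j => ¬ j ∈ I).card
        = (Finset.univ.filter fun j => u ∈ S j).card :=
      Finset.card_filter_add_card_filter_not _
    have hone := exact_one S I hcover hdisj u
    rw [h2]
    show _ = (Finset.univ.filter fun i => u ∈ S i).card - 1
    omega

end Count

/-- Lemma 2 of the paper: if the SET-COVER instance `S₁, …, Sₙ`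
(nonempty finite sets covering the finite universe `V`) admits an exact cover
(given by an index set `I`: the chosen sets are pairwise disjoint and cover `V`)
of cardinality `k`, then there is a sequence of exactly `k` deletion events
transforming the constructed genome into a genome whose CNP is the constructed CNP;
in particular `d_GCNP ≤ k`. -/
theorem exact_cover_to_deletions
    {V : Type*} [Fintype V] [DecidableEq V] (n : ℕ) (S : Fin n → Finset V)
    (hne : ∀ i, (S i).Nonempty)
    (hU : ∀ u : V, ∃ i, u ∈ S i)
    (q : Fin n → List V)
    (hq : ∀ i, (q i).Nodup)
    (hqmem : ∀ i u, u ∈ q i ↔ u ∈ S i)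
    (k : ℕ) (I : Finset (Fin n))
    (hIcard : I.card = k)
    (hcover : ∀ u : V, ∃ i ∈ I, u ∈ S i)
    (hdisj : ∀ i ∈ I, ∀ j ∈ I, i ≠ j → Disjoint (S i) (S j)) :
    (∃ E : List GEvent,
      (∀ e ∈ E, ∃ i j, e = GEvent.del i j) ∧
      E.length = k ∧
      ValidSeq (scGenome n q) E ∧
      cnp (applyEvents (scGenome n q) E) = scCNP n S) ∧
    dGCNP (scGenome n q) (scCNP n S) ≤ (k : ℕ∞) := by
  have hqne : ∀ i, q i ≠ [] := by
    intro i h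
    obtain ⟨u, hu⟩ := hne i
    have := (hqmem i u).mpr hu
    simp [h] at this
  obtain ⟨E, hE1, hE2, hE3, hE4⟩ := main_ind q hqne I.toList (Finset.nodup_toList I) ∅
    (by simp)
  rw [gJ_empty] at hE3 hE4
  have hfin : (∅ : Finset (Fin n)) ∪ I.toList.toFinset = I := by simp
  rw [hfin] at hE4
  have hcnp : cnp (applyEvents (scGenome n q) E) = scCNP n S := by
    rw [hE4]; exact cnp_gJ q hq S hqmem I hcover hdisj
  have hlen : E.length = k := by rw [hE2, Finset.length_toList, hIcard]
  refine ⟨⟨E, hE1, hlen, hE3, hcnp⟩, ?_⟩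
  apply sInf_le
  exact ⟨E, hE3, by rw [hlen], hcnp⟩
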